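/- Suppose S ⊆ ℝ^m has a finite face decomposition S = ⋃_{i=1}^{ℓ+1} Fᵢ, where each Fᵢ for i ≤ ℓ is closed, convex, not a singleton, and maximal with respect to line segments in S (if [s,s'] ⊆ S and [s,s''] ⊆ Fᵢ for some s'' strictly between s and s', then [s,s'] ⊆ Fᵢ), and F_{ℓ+1} contains no nondegenerate segment and is disjoint from each Fᵢ, i ≤ ℓ. Then every nondegenerate line segment [s,s'] contained in S is contained in Fᵢ for some i ∈ {1,…,ℓ}. -/

import Mathlib

theorem segment_in_flat_face
    {m : ℕ} {E : Type*} [NormedAddCommGroup E] [NormedSpace ℝ E]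
    [FiniteDimensional ℝ E] (hdim : Module.finrank ℝ E = m)
    (S : Set E) (hS : S.Nonempty) (ℓ : ℕ)
    (F : Fin ℓ → Set E) (G : Set E)
    (hdecomp : S = (⋃ i, F i) ∪ G)
    (hclosed : ∀ i, IsClosed (F i))
    (hconv : ∀ i, Convex ℝ (F i))
    (hsub : ∀ i, F i ⊆ S)
    (hnotpt : ∀ i, ¬ (F i).Subsingleton)
    (hmax : ∀ i, ∀ s s' : E, segment ℝ s s' ⊆ S →
      (∃ t ∈ Set.Ioc (0 : ℝ) 1, segment ℝ s (s + t • (s' - s)) ⊆ F i) →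
      segment ℝ s s' ⊆ F i)
    (hGseg : ∀ a b : E, a ≠ b → ¬ segment ℝ a b ⊆ G)
    (hGdisj : ∀ i, G ∩ F i = ∅) :
    ∀ s s' : E, s ≠ s' → segment ℝ s s' ⊆ S →
      ∃ i : Fin ℓ, segment ℝ s s' ⊆ F i := by
  intro s s' hne hseg
  set v := s' - s with hv
  have hvne : v ≠ 0 := sub_ne_zero.mpr (Ne.symm hne)
  set c : ℝ → E := fun t => s + t • v with hc
  have key : ∀ a b u : ℝ, c a + u • (c b - c a) = c (a + u * (b - a)) := by
    intro a b u
    simp only [hc]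
    module
  have hc1 : c 1 = s' := by simp [hc, hv]
  have hc0 : c 0 = s := by simp [hc]
  have hmem : ∀ r ∈ Set.Icc (0:ℝ) 1, c r ∈ segment ℝ s s' := by
    intro r hr
    rw [segment_eq_image']
    exact ⟨r, hr, rfl⟩
  have hcinj : ∀ a b : ℝ, c a = c b → a = b := by
    intro a b h
    simp only [hc, add_right_inj] at h
    have h2 : (a - b) • v = 0 := by rw [sub_smul, h, sub_self]
    rcases smul_eq_zero.mp h2 with h3 | h3
    · linarith [sub_eq_zero.mp h3]
    · exact absurd h3 hvne
  have hsub2 : ∀ a b : ℝ, a ≤ b → ∀ x ∈ segment ℝ (c a) (c b),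
      ∃ r ∈ Set.Icc a b, x = c r := by
    intro a b hab x hx
    rw [segment_eq_image'] at hx
    obtain ⟨u, hu, rfl⟩ := hx
    refine ⟨a + u * (b - a), ⟨?_, ?_⟩, key a b u⟩
    · nlinarith [hu.1, hu.2]
    · nlinarith [hu.1, hu.2]
  have claim : ∃ i : Fin ℓ, ∃ t t0 : ℝ,
      0 < t ∧ t < t0 ∧ t0 ≤ 1 ∧ c t ∈ F i ∧ c t0 ∈ F i := by
    by_contra hcon
    push_neg at hcon
    have hdelta : ∀ i : Fin ℓ, ∃ δ : ℝ, 0 < δ ∧ ∀ t : ℝ, 0 < t → t < δ → c t ∉ F i := by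
      intro i
      by_cases h : ∃ t ∈ Set.Ioc (0:ℝ) 1, c t ∈ F i
      · obtain ⟨t0, ht0, hmemF⟩ := h
        exact ⟨t0, ht0.1, fun t ht htlt hF =>
          (hcon i t t0 ht htlt ht0.2 hF) hmemF⟩
      · push_neg at h
        exact ⟨1, one_pos, fun t ht htlt => h t ⟨ht, le_of_lt htlt⟩⟩
    choose δ hδpos hδ using hdelta
    set T : Finset ℝ := insert 1 (Finset.image δ Finset.univ) with hT
    have hTne : T.Nonempty := ⟨1, Finset.mem_insert_self _ _⟩
    set δ₀ := T.min' hTne with hδ₀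
    have hTpos : ∀ x ∈ T, 0 < x := by
      intro x hx
      rcases Finset.mem_insert.mp hx with h | h
      · rw [h]; exact one_pos
      · obtain ⟨i, _, rfl⟩ := Finset.mem_image.mp h
        exact hδpos i
    have hδ₀pos : 0 < δ₀ := hTpos _ (T.min'_mem hTne)
    have hδ₀le1 : δ₀ ≤ 1 := T.min'_le 1 (Finset.mem_insert_self _ _)
    have hδ₀lei : ∀ i, δ₀ ≤ δ i := fun i =>
      T.min'_le _ (Finset.mem_insert.mpr (Or.inr
        (Finset.mem_image.mpr ⟨i, Finset.mem_univ i, rfl⟩)))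
    have hG : ∀ t : ℝ, 0 < t → t < δ₀ → c t ∈ G := by
      intro t ht hlt
      have hcS : c t ∈ S :=
        hseg (hmem t ⟨le_of_lt ht, le_trans (le_of_lt hlt) hδ₀le1⟩)
      rw [hdecomp] at hcS
      rcases hcS with h | h
      · obtain ⟨i, hi⟩ := Set.mem_iUnion.mp h
        exact absurd hi (hδ i t ht (lt_of_lt_of_le hlt (hδ₀lei i)))
      · exact h
    have hab : (δ₀/3 : ℝ) < δ₀/2 := by linarith
    refine hGseg (c (δ₀/3)) (c (δ₀/2)) ?_ ?_
    · intro h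
      have := hcinj _ _ h
      linarith
    · intro x hx
      obtain ⟨r, hr, rfl⟩ := hsub2 (δ₀/3) (δ₀/2) (le_of_lt hab) x hx
      exact hG r (by linarith [hr.1]) (by linarith [hr.2])
  obtain ⟨i, t, t0, ht, htt0, ht01, hFt, hFt0⟩ := claim
  have ht1 : t < 1 := lt_of_lt_of_le htt0 ht01
  have h1t : (1:ℝ) - t ≠ 0 := by linarith
  have step1 : segment ℝ (c t) s' ⊆ F i := by
    apply hmax i (c t) s'
    · intro x hx
      rw [← hc1] at hx
      obtain ⟨r, hr, rfl⟩ := hsub2 t 1 (le_of_lt ht1) x hx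
      exact hseg (hmem r ⟨le_trans (le_of_lt ht) hr.1, hr.2⟩)
    · refine ⟨(t0 - t)/(1 - t), ⟨div_pos (by linarith) (by linarith),
        (div_le_one (by linarith)).mpr (by linarith)⟩, ?_⟩
      have e : c t + ((t0 - t)/(1 - t)) • (s' - c t) = c t0 := by
        rw [← hc1, key]
        congr 1
        field_simp
        ring
      rw [e]
      exact (hconv i).segment_subset hFt hFt0
  have step2 : segment ℝ s' s ⊆ F i := by
    apply hmax i s' s
    · rw [segment_symm]; exact hseg
    · refine ⟨1 - t, ⟨by linarith, by linarith⟩, ?_⟩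
      have e : s' + (1 - t) • (s - s') = c t := by
        rw [← hc1, ← hc0, key]
        congr 1
        ring
      rw [e, segment_symm]
      exact step1
  exact ⟨i, by rw [segment_symm]; exact step2⟩
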